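/- arXiv:1801.01234 — 3 statements merged into one kernel-verified Lean document; each statement's English description precedes it below -/
import Mathlib

section
/- For a ∈ B_n \ {0} and any vector z ∈ ℂⁿ, the derivative of the Möbius automorphism φ_a at the point a applied to z satisfies |φ_a'(a) z| = sqrt((1-|a|²)|z|² + |⟨z,a⟩|²) / (1-|a|²). -/
set_option maxHeartbeats 1000000

/-- The Möbius automorphism `φ_a` of the unit ball of `ℂⁿ`.
Here `inner ℂ a z = Σ conj (a j) * z j` corresponds to the paper's `⟨z, a⟩`. -/
noncomputable def phiMob {n : ℕ} (a z : EuclideanSpace ℂ (Fin n)) : EuclideanSpace ℂ (Fin n) :=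
  (1 - (inner ℂ a z : ℂ))⁻¹ •
    (a - ((inner ℂ a z : ℂ) / (‖a‖ ^ 2 : ℂ)) • a
       - ((Real.sqrt (1 - ‖a‖ ^ 2) : ℂ)) • (z - ((inner ℂ a z : ℂ) / (‖a‖ ^ 2 : ℂ)) • a))

theorem stmt1 {n : ℕ} (a : EuclideanSpace ℂ (Fin n)) (ha : ‖a‖ < 1) (ha0 : a ≠ 0)
    (z : EuclideanSpace ℂ (Fin n)) :
    ‖fderiv ℂ (phiMob a) a z‖ =
      Real.sqrt ((1 - ‖a‖ ^ 2) * ‖z‖ ^ 2 + ‖(inner ℂ a z : ℂ)‖ ^ 2) / (1 - ‖a‖ ^ 2) := by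
  have hA0 : (0:ℝ) < ‖a‖ ^ 2 := pow_pos (norm_pos_iff.2 ha0) 2
  have hA1 : ‖a‖ ^ 2 < 1 := by nlinarith [norm_nonneg a]
  set s : ℝ := Real.sqrt (1 - ‖a‖ ^ 2) with hs
  have hs2 : s ^ 2 = 1 - ‖a‖ ^ 2 := Real.sq_sqrt (by linarith)
  set T : EuclideanSpace ℂ (Fin n) →L[ℂ] ℂ := innerSL ℂ a with hT
  set P : EuclideanSpace ℂ (Fin n) →L[ℂ] EuclideanSpace ℂ (Fin n) :=
    T.smulRight (((‖a‖ ^ 2 : ℂ))⁻¹ • a) with hP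
  have hPz : ∀ w, P w = ((inner ℂ a w : ℂ) / (‖a‖ ^ 2 : ℂ)) • a := by
    intro w
    simp [hP, hT, smul_smul, div_eq_mul_inv]
  set G : EuclideanSpace ℂ (Fin n) →L[ℂ] EuclideanSpace ℂ (Fin n) :=
    ((0 : EuclideanSpace ℂ (Fin n) →L[ℂ] EuclideanSpace ℂ (Fin n)) - P)
      - ((s : ℂ)) • (ContinuousLinearMap.id ℂ _ - P) with hG
  have hinnaa : (inner ℂ a a : ℂ) = (‖a‖ : ℂ) ^ 2 := inner_self_eq_norm_sq_to_K a
  have hcast : (1 : ℂ) - (‖a‖ : ℂ) ^ 2 = ((1 - ‖a‖ ^ 2 : ℝ) : ℂ) := by push_cast; ring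
  have hne : ((1 - ‖a‖ ^ 2 : ℝ) : ℂ) ≠ 0 := by
    exact_mod_cast (by linarith : (1 - ‖a‖ ^ 2 : ℝ) ≠ 0)
  have hAneC : ((‖a‖ : ℂ)) ^ 2 ≠ 0 :=
    pow_ne_zero 2 (by exact_mod_cast (norm_pos_iff.2 ha0).ne')
  have hPa : P a = a := by
    rw [hPz, hinnaa, div_self hAneC]
    simp
  have hc0 : (1 : ℂ) - inner ℂ a a ≠ 0 := by rw [hinnaa, hcast]; exact hne
  -- the affine part
  have haff : HasFDerivAt
      (fun w : EuclideanSpace ℂ (Fin n) => a - P w - (s : ℂ) • (w - P w)) G a := by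
    have h1 : HasFDerivAt (fun w : EuclideanSpace ℂ (Fin n) => a - P w)
        ((0 : EuclideanSpace ℂ (Fin n) →L[ℂ] EuclideanSpace ℂ (Fin n)) - P) a :=
      (hasFDerivAt_const a a).sub P.hasFDerivAt
    have h2 : HasFDerivAt (fun w : EuclideanSpace ℂ (Fin n) => w - P w)
        (ContinuousLinearMap.id ℂ _ - P) a := (hasFDerivAt_id a).sub P.hasFDerivAt
    exact h1.sub (h2.const_smul ((s : ℂ)))
  -- the scalar part
  have hTd : HasFDerivAt (fun w : EuclideanSpace ℂ (Fin n) => (1 : ℂ) - inner ℂ a w)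
      (-T) a := by
    have := ((hasFDerivAt_const (1:ℂ) a).sub T.hasFDerivAt)
    exact this.congr_fderiv (by simp)
  have hcd : HasFDerivAt (fun w : EuclideanSpace ℂ (Fin n) => ((1 : ℂ) - inner ℂ a w)⁻¹)
      (((-ContinuousLinearMap.mulLeftRight ℂ ℂ ((1 - inner ℂ a a : ℂ))⁻¹
          ((1 - inner ℂ a a : ℂ))⁻¹)).comp (-T)) a :=
    (hasFDerivAt_inv' hc0).comp a hTd
  have hmul := hcd.smul haff
  have hfun : (fun w : EuclideanSpace ℂ (Fin n) =>
      ((1 : ℂ) - inner ℂ a w)⁻¹ • (a - P w - (s : ℂ) • (w - P w))) = phiMob a := by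
    funext w
    rw [phiMob, hPz]
  have hga : a - P a - (s : ℂ) • (a - P a) = 0 := by rw [hPa]; simp
  have hD : HasFDerivAt (phiMob a) (((1 : ℂ) - inner ℂ a a)⁻¹ • G) a := by
    rw [← hfun]
    rw [hga] at hmul
    refine hmul.congr_fderiv ?_
    ext w
    simp
  rw [hD.fderiv]
  -- now compute the norm
  have hGz : G z = (((s : ℂ) - 1) * ((inner ℂ a z : ℂ) / (‖a‖ ^ 2 : ℂ))) • a - (s : ℂ) • z := by
    simp only [hG, ContinuousLinearMap.coe_sub', Pi.sub_apply, ContinuousLinearMap.zero_apply,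
      ContinuousLinearMap.coe_smul', Pi.smul_apply, ContinuousLinearMap.coe_id', id_eq]
    rw [hPz]
    module
  set t : ℂ := (inner ℂ a z : ℂ) with ht
  have hnormG : ‖G z‖ ^ 2 = (1 - ‖a‖ ^ 2) * ‖z‖ ^ 2 + ‖t‖ ^ 2 := by
    rw [hGz]
    rw [@norm_sub_sq ℂ]
    have hsa : ‖((s : ℂ) - 1)‖ = |s - 1| := by
      rw [show ((s:ℂ) - 1) = ((s - 1 : ℝ) : ℂ) by push_cast; ring, Complex.norm_real,
        Real.norm_eq_abs]
    have hna : ‖((‖a‖ : ℂ)) ^ 2‖ = ‖a‖ ^ 2 := by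
      rw [norm_pow, Complex.norm_real, Real.norm_eq_abs, abs_norm]
    have h1 : ‖(((s : ℂ) - 1) * (t / (‖a‖ ^ 2 : ℂ))) • a‖ ^ 2
        = (s - 1) ^ 2 * ‖t‖ ^ 2 / ‖a‖ ^ 2 := by
      rw [norm_smul, norm_mul, norm_div, hsa, hna]
      rw [mul_pow, mul_pow, div_pow, sq_abs]
      field_simp
    have h2 : RCLike.re (inner ℂ ((((s : ℂ) - 1) * (t / (‖a‖ ^ 2 : ℂ))) • a) ((s : ℂ) • z) : ℂ)
        = (s - 1) * s * ‖t‖ ^ 2 / ‖a‖ ^ 2 := by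
      rw [inner_smul_left, inner_smul_right]
      have heq : (starRingEnd ℂ) (((s : ℂ) - 1) * (t / (‖a‖ ^ 2 : ℂ))) * ((s : ℂ) * t)
          = ((((s - 1) * s / ‖a‖ ^ 2 : ℝ)) : ℂ) * ((starRingEnd ℂ) t * t) := by
        simp only [map_mul, map_sub, map_one, map_div₀, map_pow, Complex.conj_ofReal]
        push_cast
        ring
      rw [heq, Complex.conj_mul']
      rw [show ((((s - 1) * s / ‖a‖ ^ 2 : ℝ)) : ℂ) * (((‖t‖ : ℝ) : ℂ) ^ 2)
          = (((s - 1) * s / ‖a‖ ^ 2 * ‖t‖ ^ 2 : ℝ) : ℂ) by push_cast; ring]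
      simp only [RCLike.re_to_complex, Complex.ofReal_re]
      ring
    have h3 : ‖(s : ℂ) • z‖ ^ 2 = s ^ 2 * ‖z‖ ^ 2 := by
      rw [norm_smul, Complex.norm_real, Real.norm_eq_abs, mul_pow, sq_abs]
    rw [h1, h2, h3, hs2]
    have hAne : (‖a‖ : ℝ) ^ 2 ≠ 0 := ne_of_gt hA0
    have key : (s - 1) ^ 2 * ‖t‖ ^ 2 / ‖a‖ ^ 2 - 2 * ((s - 1) * s * ‖t‖ ^ 2 / ‖a‖ ^ 2)
        = ‖t‖ ^ 2 := by
      have e : (s - 1) ^ 2 * ‖t‖ ^ 2 / ‖a‖ ^ 2 - 2 * ((s - 1) * s * ‖t‖ ^ 2 / ‖a‖ ^ 2)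
          = ((s - 1) ^ 2 - 2 * ((s - 1) * s)) * (‖t‖ ^ 2 / ‖a‖ ^ 2) := by ring
      have e2 : (s - 1) ^ 2 - 2 * ((s - 1) * s) = ‖a‖ ^ 2 := by nlinarith [hs2]
      rw [e, e2, mul_div_assoc']
      exact mul_div_cancel_left₀ _ hAne
    linarith [key]
  have hDz : ‖(((1 : ℂ) - inner ℂ a a)⁻¹ • G) z‖ = ‖G z‖ / (1 - ‖a‖ ^ 2) := by
    simp only [ContinuousLinearMap.coe_smul', Pi.smul_apply]
    rw [norm_smul, hinnaa, hcast, norm_inv, Complex.norm_real, Real.norm_eq_abs,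
      abs_of_pos (by linarith : (0:ℝ) < 1 - ‖a‖ ^ 2)]
    ring
  rw [hDz]
  congr 1
  rw [← hnormG]
  exact (Real.sqrt_sq (norm_nonneg _)).symm
end

section
/- Let 0 < r < 1, 0 < s < 1 and let f be holomorphic on B_n. Then for all z with |z| ≤ s, |f(z) - f(rz)| ≤ (2n(1-r)/(1-s)) · max_{|w| ≤ (1+s)/2} |f(w)|. -/
open Metric Set Complex

theorem stmt7 {n : ℕ} (r s : ℝ) (hr0 : 0 < r) (hr1 : r < 1) (hs0 : 0 < s) (hs1 : s < 1)
    (f : EuclideanSpace ℂ (Fin n) → ℂ)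
    (hf : DifferentiableOn ℂ f (Metric.ball (0 : EuclideanSpace ℂ (Fin n)) 1))
    (C : ℝ) (hC : ∀ w : EuclideanSpace ℂ (Fin n), ‖w‖ ≤ (1 + s) / 2 → ‖f w‖ ≤ C) :
    ∀ z : EuclideanSpace ℂ (Fin n), ‖z‖ ≤ s →
      ‖f z - f (r • z)‖ ≤ (2 * n * (1 - r) / (1 - s)) * C := by
  intro z hz
  have hC0 : 0 ≤ C := le_trans (norm_nonneg _) (hC 0 (by rw [norm_zero]; linarith))
  rcases Nat.eq_zero_or_pos n with hn | hn
  · subst hn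
    have hz0 : z = r • z := Subsingleton.elim _ _
    rw [← hz0, sub_self, norm_zero]
    simp
  -- main case
  set δ : ℝ := (1 - s) / (2 * s) with hδdef
  have hδ : 0 < δ := div_pos (by linarith) (by linarith)
  -- the slice function
  set g : ℂ → ℂ := fun t => f (t • z) with hgdef
  -- points t•z with |t| ≤ 1 + δ lie in the ball of radius (1+s)/2
  have key : ∀ t : ℂ, ‖t‖ ≤ 1 + δ → ‖t • z‖ ≤ (1 + s) / 2 := by
    intro t ht
    have : ‖t • z‖ = ‖t‖ * ‖z‖ := norm_smul t z
    rw [this]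
    calc ‖t‖ * ‖z‖ ≤ (1 + δ) * s :=
          mul_le_mul ht hz (norm_nonneg _) (by positivity)
      _ = s + (1 - s) / 2 := by rw [hδdef]; field_simp <;> ring
      _ = (1 + s) / 2 := by ring
  have hhalf : (1 + s) / 2 < 1 := by linarith
  -- g is differentiable at any point of norm ≤ 1 + δ
  have hgdiff : ∀ t : ℂ, ‖t‖ ≤ 1 + δ → DifferentiableAt ℂ g t := by
    intro t ht
    have h1 : DifferentiableAt ℂ f (t • z) := by
      apply hf.differentiableAt
      apply isOpen_ball.mem_nhds
      simp only [mem_ball, dist_zero_right]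
      exact lt_of_le_of_lt (key t ht) hhalf
    exact h1.comp t ((differentiable_id.smul_const z) t)
  -- Cauchy estimate for the derivative of g at real points t ∈ [r, 1]
  have hderiv : ∀ t : ℂ, t ∈ segment ℝ (r : ℂ) 1 → ‖deriv g t‖ ≤ 2 * C / (1 - s) := by
    intro t htseg
    obtain ⟨a, b, ha, hb, hab, habt⟩ := htseg
    have htval : t = ((a * r + b : ℝ) : ℂ) := by
      rw [← habt]; push_cast [Complex.real_smul]; ring
    have htnorm : ‖t‖ ≤ 1 := by
      rw [htval, Complex.norm_real, Real.norm_eq_abs,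
        _root_.abs_of_nonneg (by positivity)]
      nlinarith
    have hball : ∀ w : ℂ, w ∈ closedBall t δ → ‖w‖ ≤ 1 + δ := by
      intro w hw
      rw [mem_closedBall, dist_eq_norm] at hw
      have h := norm_sub_norm_le w t
      linarith
    have hdc : DiffContOnCl ℂ g (ball t δ) := by
      apply DifferentiableOn.diffContOnCl
      rw [closure_ball t hδ.ne']
      exact fun w hw => (hgdiff w (hball w hw)).differentiableWithinAt
    have hbd : ∀ w ∈ sphere t δ, ‖g w‖ ≤ C := by
      intro w hw
      apply hC
      apply key
      exact hball w (sphere_subset_closedBall hw)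
    have := norm_deriv_le_of_forall_mem_sphere_norm_le hδ hdc hbd
    calc ‖deriv g t‖ ≤ C / δ := this
      _ = 2 * s * C / (1 - s) := by rw [hδdef]; field_simp
      _ ≤ 2 * C / (1 - s) := by
          have h2 : 2 * s * C ≤ 2 * C := by nlinarith
          gcongr
  -- mean value inequality on the segment [r, 1]
  have hseg : Convex ℝ (segment ℝ (r : ℂ) 1) := convex_segment _ _
  have hmem : ∀ t ∈ segment ℝ (r : ℂ) 1, ‖t‖ ≤ 1 + δ := by
    intro t ht
    obtain ⟨a, b, ha, hb, hab, habt⟩ := ht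
    have htval : t = ((a * r + b : ℝ) : ℂ) := by
      rw [← habt]; push_cast [Complex.real_smul]; ring
    rw [htval, Complex.norm_real, Real.norm_eq_abs,
      _root_.abs_of_nonneg (by positivity)]
    nlinarith [hδ.le]
  have hmvt : ‖g 1 - g (r : ℂ)‖ ≤ (2 * C / (1 - s)) * ‖(1 : ℂ) - (r : ℂ)‖ := by
    apply hseg.norm_image_sub_le_of_norm_hasFDerivWithin_le
      (f' := fun t => ContinuousLinearMap.smulRight (1 : ℂ →L[ℂ] ℂ) (deriv g t))
    · intro t ht
      exact ((hgdiff t (hmem t ht)).hasDerivAt.hasFDerivAt).hasFDerivWithinAt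
    · intro t ht
      rw [ContinuousLinearMap.norm_smulRight_apply, norm_one, one_mul]
      exact hderiv t ht
    · exact left_mem_segment ℝ _ _
    · exact right_mem_segment ℝ _ _
  have h1r : ‖(1 : ℂ) - (r : ℂ)‖ = 1 - r := by
    rw [show (1 : ℂ) - (r : ℂ) = ((1 - r : ℝ) : ℂ) by push_cast; ring,
      Complex.norm_real, Real.norm_eq_abs, _root_.abs_of_nonneg (by linarith)]
  have hsm : (r : ℂ) • z = r • z := by
    ext i
    simp [Complex.real_smul]
  have hgval : g 1 = f z ∧ g (r : ℂ) = f (r • z) := by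
    refine ⟨by simp [hgdef], ?_⟩
    simp only [hgdef]
    rw [hsm]
  rw [← hgval.1, ← hgval.2]
  calc ‖g 1 - g (r : ℂ)‖ ≤ (2 * C / (1 - s)) * ‖(1 : ℂ) - (r : ℂ)‖ := hmvt
    _ = 2 * (1 - r) / (1 - s) * C := by rw [h1r]; ring
    _ ≤ 2 * n * (1 - r) / (1 - s) * C := by
        apply mul_le_mul_of_nonneg_right ?_ hC0
        have hn1 : (1 : ℝ) ≤ n := by exact_mod_cast hn
        have h2 : 2 * (1 - r) ≤ 2 * n * (1 - r) := by nlinarith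
        gcongr
end

section
/- Let u be holomorphic on B_n, φ a holomorphic self-map of B_n, and suppose u ∈ B and M₂ := sup_{z ∈ B_n} (1-|z|²)|u(z)| sqrt(H_{φ(z)}(φ'(z)z, φ'(z)z)) < ∞, where H_w(v,v) = ((n+1)/2)((1-|w|²)|v|² + |⟨v,w⟩|²)/(1-|w|²)² is the Bergman metric. Then the weighted composition operator uC_φ : H^∞ → B is bounded, with ‖uC_φ f‖_B ≲ (‖u‖_B + M₂)‖f‖_∞. -/
open Metric Set

set_option maxHeartbeats 1000000

/-- The Bergman metric `H_w(v,v)`; `inner w v` is the paper's `⟨v, w⟩`. -/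
noncomputable def bergman {n : ℕ} (w v : EuclideanSpace ℂ (Fin n)) : ℝ :=
  ((n + 1 : ℝ) / 2) * ((1 - ‖w‖ ^ 2) * ‖v‖ ^ 2 + ‖(inner ℂ w v : ℂ)‖ ^ 2) / (1 - ‖w‖ ^ 2) ^ 2

lemma slice_bound {n : ℕ} {f : EuclideanSpace ℂ (Fin n) → ℂ}
    (hf : DifferentiableOn ℂ f (ball (0 : EuclideanSpace ℂ (Fin n)) 1)) {B : ℝ}
    (hB : ∀ x ∈ ball (0 : EuclideanSpace ℂ (Fin n)) 1, ‖f x‖ ≤ B)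
    {w d : EuclideanSpace ℂ (Fin n)}
    (hd : ∀ l : ℂ, ‖l‖ < 1 → w + l • d ∈ ball (0 : EuclideanSpace ℂ (Fin n)) 1) :
    ‖fderiv ℂ f w d‖ ≤ 2 * B := by
  have hw : w ∈ ball (0 : EuclideanSpace ℂ (Fin n)) 1 := by
    have := hd 0 (by norm_num)
    simpa using this
  set h : ℂ → ℂ := fun l => f (w + l • d) with hh
  have hg : ∀ l : ℂ, HasDerivAt (fun l : ℂ => w + l • d) d l := by
    intro l
    simpa using ((hasDerivAt_id l).smul_const d).const_add w
  have hdiff : DifferentiableOn ℂ h (ball (0 : ℂ) 1) := by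
    intro l hl
    have hl' : ‖l‖ < 1 := by simpa using (mem_ball_zero_iff).1 hl
    have hfl : DifferentiableAt ℂ f (w + l • d) :=
      hf.differentiableAt (isOpen_ball.mem_nhds (hd l hl'))
    exact (hfl.comp l (hg l).differentiableAt).differentiableWithinAt
  have hF : HasFDerivAt f (fderiv ℂ f w) (w + (0 : ℂ) • d) := by
    simpa using (hf.differentiableAt (isOpen_ball.mem_nhds hw)).hasFDerivAt
  have hderiv : HasDerivAt h (fderiv ℂ f w d) 0 := hF.comp_hasDerivAt 0 (hg 0)
  have hder : deriv h 0 = fderiv ℂ f w d := hderiv.deriv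
  have hBnn : 0 ≤ B := (norm_nonneg _).trans (hB w hw)
  have key : ∀ ε : ℝ, 0 < ε → ‖deriv h 0‖ ≤ 2 * B + ε := by
    intro ε hε
    have hmaps : MapsTo h (ball (0 : ℂ) 1) (ball (h 0) (2 * B + ε)) := by
      intro l hl
      have hl' : ‖l‖ < 1 := by simpa using (mem_ball_zero_iff).1 hl
      have h1 : ‖h l‖ ≤ B := hB _ (hd l hl')
      have h2 : ‖h 0‖ ≤ B := by
        have := hB _ (hd 0 (by norm_num))
        simpa [hh] using this
      have : ‖h l - h 0‖ < 2 * B + ε := by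
        calc ‖h l - h 0‖ ≤ ‖h l‖ + ‖h 0‖ := norm_sub_le _ _
          _ ≤ 2 * B := by linarith
          _ < 2 * B + ε := by linarith
      simpa [mem_ball, dist_eq_norm] using this
    have := Complex.norm_deriv_le_div_of_mapsTo_ball hdiff (hmaps.mono_right ball_subset_closedBall) one_pos
    simpa using this
  rw [← hder]
  exact le_of_forall_pos_le_add key



lemma slice_scaled {n : ℕ} {f : EuclideanSpace ℂ (Fin n) → ℂ}
    (hf : DifferentiableOn ℂ f (ball (0 : EuclideanSpace ℂ (Fin n)) 1)) {B : ℝ}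
    (hB : ∀ x ∈ ball (0 : EuclideanSpace ℂ (Fin n)) 1, ‖f x‖ ≤ B)
    {w x : EuclideanSpace ℂ (Fin n)} {c : ℝ} (hc : 0 < c)
    (hd : ∀ l : ℂ, ‖l‖ < 1 → w + l • (((c : ℝ) : ℂ) • x) ∈ ball (0 : EuclideanSpace ℂ (Fin n)) 1) :
    ‖fderiv ℂ f w x‖ ≤ 2 * B / c := by
  have hsl := slice_bound hf hB hd
  rw [(fderiv ℂ f w).map_smul, norm_smul, Complex.norm_real, Real.norm_eq_abs,
    abs_of_pos hc] at hsl
  rw [le_div_iff₀ hc]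
  linarith [hsl, mul_comm c ‖fderiv ℂ f w x‖]

lemma ortho_decomp {n : ℕ} (w v : EuclideanSpace ℂ (Fin n)) (hw : 0 < ‖w‖) :
    ∃ a b : EuclideanSpace ℂ (Fin n), v = a + b ∧ (inner ℂ w b : ℂ) = 0 ∧
      ‖a‖ = ‖(inner ℂ w v : ℂ)‖ / ‖w‖ ∧ ‖v‖ ^ 2 = ‖a‖ ^ 2 + ‖b‖ ^ 2 := by
  set s : ℝ := ‖w‖ ^ 2 with hs_def
  have hs0 : 0 < s := by positivity
  set t : ℂ := (inner ℂ w v : ℂ) with ht_def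
  have hsne : (s : ℂ) ≠ 0 := by
    simp only [ne_eq, Complex.ofReal_eq_zero]
    exact hs0.ne'
  refine ⟨(t / (s : ℂ)) • w, v - (t / (s : ℂ)) • w, by abel, ?_, ?_, ?_⟩
  · have hww : (inner ℂ w w : ℂ) = (s : ℂ) := by
      rw [inner_self_eq_norm_sq_to_K, hs_def]
      norm_cast
    rw [inner_sub_right, inner_smul_right, hww, div_mul_cancel₀ _ hsne, ← ht_def, sub_self]
  · rw [norm_smul, norm_div, Complex.norm_real, Real.norm_eq_abs, abs_of_pos hs0, hs_def, sq]
    field_simp [hw.ne']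
  · have hww : (inner ℂ w w : ℂ) = (s : ℂ) := by
      rw [inner_self_eq_norm_sq_to_K, hs_def]
      norm_cast
    have hwb : (inner ℂ w (v - (t / (s : ℂ)) • w) : ℂ) = 0 := by
      rw [inner_sub_right, inner_smul_right, hww, div_mul_cancel₀ _ hsne, ← ht_def, sub_self]
    have hab : (inner ℂ ((t / (s : ℂ)) • w) (v - (t / (s : ℂ)) • w) : ℂ) = 0 := by
      rw [inner_smul_left, hwb, mul_zero]
    have h := norm_add_sq_eq_norm_sq_add_norm_sq_of_inner_eq_zero _ _ hab
    have hv : v = (t / (s : ℂ)) • w + (v - (t / (s : ℂ)) • w) := by abel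
    conv_lhs => rw [hv]
    rw [pow_two, pow_two, pow_two]
    exact h


lemma bergman_bound {n : ℕ} {f : EuclideanSpace ℂ (Fin n) → ℂ}
    (hf : DifferentiableOn ℂ f (ball (0 : EuclideanSpace ℂ (Fin n)) 1)) {B : ℝ}
    (hB : ∀ x ∈ ball (0 : EuclideanSpace ℂ (Fin n)) 1, ‖f x‖ ≤ B)
    {w : EuclideanSpace ℂ (Fin n)} (hw : w ∈ ball (0 : EuclideanSpace ℂ (Fin n)) 1)
    (v : EuclideanSpace ℂ (Fin n)) :
    ‖fderiv ℂ f w v‖ ≤ 32 * B * Real.sqrt (bergman w v) := by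
  have hw1 : ‖w‖ < 1 := by simpa using mem_ball_zero_iff.1 hw
  have hw0 : (0:ℝ) ≤ ‖w‖ := norm_nonneg _
  set s : ℝ := ‖w‖ ^ 2 with hs_def
  have hs1 : s < 1 := by nlinarith
  have hs0 : 0 ≤ s := sq_nonneg _
  have h1s : 0 < 1 - s := by linarith
  have hBnn : 0 ≤ B := (norm_nonneg _).trans (hB 0 (by simp))
  set t : ℂ := (inner ℂ w v : ℂ) with ht_def
  set bg : ℝ := bergman w v with hbg_def
  set N : ℝ := (1 - s) * ‖v‖ ^ 2 + ‖t‖ ^ 2 with hN_def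
  have hcoef : (1:ℝ) ≤ ((n:ℝ) + 1) := by
    have := Nat.cast_nonneg (α := ℝ) n
    linarith
  have hbg_eq : bg = ((n + 1 : ℝ) / 2) * N / (1 - s) ^ 2 := rfl
  have hN_nn : 0 ≤ N := by
    rw [hN_def]
    exact add_nonneg (mul_nonneg h1s.le (sq_nonneg _)) (sq_nonneg _)
  have hbg_nn : 0 ≤ bg := by
    rw [hbg_eq]
    exact div_nonneg (mul_nonneg (by positivity) hN_nn) (sq_nonneg _)
  have hsqrt_nn : 0 ≤ Real.sqrt bg := Real.sqrt_nonneg _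
  have hbgD : bg * (1 - s) ^ 2 = ((n + 1 : ℝ) / 2) * N := by
    rw [hbg_eq]; field_simp
  have key : N ≤ 2 * bg * (1 - s) ^ 2 := by nlinarith
  have sqrt2 : Real.sqrt 2 ≤ 2 := by
    nlinarith [Real.sq_sqrt (show (0:ℝ) ≤ 2 by norm_num), Real.sqrt_nonneg 2]
  have sqrt2nn : 0 ≤ Real.sqrt 2 := Real.sqrt_nonneg 2
  have sqrt1s : Real.sqrt (1 - s) ≤ 1 := by
    have := Real.sqrt_le_sqrt (show 1 - s ≤ 1 by linarith)
    simpa using this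
  have sqrt1s_nn : 0 ≤ Real.sqrt (1 - s) := Real.sqrt_nonneg _
  have hv_le : ‖v‖ ≤ Real.sqrt 2 * Real.sqrt bg * Real.sqrt (1 - s) := by
    have h1 : ‖v‖ ^ 2 ≤ 2 * bg * (1 - s) := by
      have h2 : (1 - s) * ‖v‖ ^ 2 ≤ N := by rw [hN_def]; nlinarith [sq_nonneg ‖t‖]
      have h3 : (1 - s) * ‖v‖ ^ 2 ≤ (1 - s) * (2 * bg * (1 - s)) := by nlinarith
      exact le_of_mul_le_mul_left (by linarith) h1s
    calc ‖v‖ = Real.sqrt (‖v‖ ^ 2) := (Real.sqrt_sq (norm_nonneg _)).symm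
      _ ≤ Real.sqrt (2 * bg * (1 - s)) := Real.sqrt_le_sqrt h1
      _ = Real.sqrt 2 * Real.sqrt bg * Real.sqrt (1 - s) := by
          rw [Real.sqrt_mul (by positivity), Real.sqrt_mul (by norm_num)]
  have ht_le : ‖t‖ ≤ Real.sqrt 2 * Real.sqrt bg * (1 - s) := by
    have h1 : ‖t‖ ^ 2 ≤ 2 * bg * (1 - s) ^ 2 := by
      have h2 : ‖t‖ ^ 2 ≤ N := by rw [hN_def]; nlinarith [sq_nonneg ‖v‖]
      linarith
    calc ‖t‖ = Real.sqrt (‖t‖ ^ 2) := (Real.sqrt_sq (norm_nonneg _)).symm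
      _ ≤ Real.sqrt (2 * bg * (1 - s) ^ 2) := Real.sqrt_le_sqrt h1
      _ = Real.sqrt 2 * Real.sqrt bg * (1 - s) := by
          rw [Real.sqrt_mul (by positivity), Real.sqrt_mul (by norm_num),
            Real.sqrt_sq h1s.le]
  by_cases hwhalf : ‖w‖ ≤ 1 / 2
  · by_cases hv0 : v = 0
    · rw [hv0]
      simp only [map_zero, norm_zero]
      positivity
    · have hvn : 0 < ‖v‖ := norm_pos_iff.2 hv0
      have hcpos : (0:ℝ) < 1 / (2 * ‖v‖) := by positivity
      have hdisk : ∀ l : ℂ, ‖l‖ < 1 →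
          w + l • (((1 / (2 * ‖v‖) : ℝ) : ℂ) • v) ∈ ball (0 : EuclideanSpace ℂ (Fin n)) 1 := by
        intro l hl
        rw [mem_ball_zero_iff]
        have hnd : ‖(((1 / (2 * ‖v‖) : ℝ) : ℂ) • v)‖ = 1 / 2 := by
          rw [norm_smul, Complex.norm_real, Real.norm_eq_abs, abs_of_pos hcpos]
          field_simp
        calc ‖w + l • (((1 / (2 * ‖v‖) : ℝ) : ℂ) • v)‖
            ≤ ‖w‖ + ‖l‖ * ‖(((1 / (2 * ‖v‖) : ℝ) : ℂ) • v)‖ := by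
              rw [← norm_smul]; exact norm_add_le _ _
          _ < 1 := by rw [hnd]; nlinarith
      have hsl := slice_scaled hf hB hcpos hdisk
      have h4 : ‖fderiv ℂ f w v‖ ≤ 4 * B * ‖v‖ := by
        rw [show 2 * B / (1 / (2 * ‖v‖)) = 4 * B * ‖v‖ by field_simp; ring] at hsl
        exact hsl
      calc ‖fderiv ℂ f w v‖ ≤ 4 * B * ‖v‖ := h4
        _ ≤ 4 * B * (Real.sqrt 2 * Real.sqrt bg * Real.sqrt (1 - s)) :=
            mul_le_mul_of_nonneg_left hv_le (by positivity)
        _ ≤ 32 * B * Real.sqrt bg := by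
            nlinarith [mul_nonneg hBnn hsqrt_nn, mul_nonneg (mul_nonneg hBnn hsqrt_nn) sqrt1s_nn,
              mul_nonneg (mul_nonneg hBnn hsqrt_nn) sqrt2nn]
  · push_neg at hwhalf
    have hwpos : 0 < ‖w‖ := by linarith
    obtain ⟨a, b, hv_ab, hwb, hna, hpyth⟩ := ortho_decomp w v hwpos
    have hnb_le : ‖b‖ ≤ ‖v‖ := by nlinarith [norm_nonneg b, norm_nonneg v]
    -- bound on ‖F a‖
    have hFa : ‖fderiv ℂ f w a‖ ≤ 2 * B * ‖a‖ / (1 - ‖w‖) := by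
      by_cases ha0 : a = 0
      · rw [ha0]
        simp
      · have hanz : 0 < ‖a‖ := norm_pos_iff.2 ha0
        have hcpos : 0 < (1 - ‖w‖) / ‖a‖ := div_pos (by linarith) hanz
        have hdisk : ∀ l : ℂ, ‖l‖ < 1 →
            w + l • ((((1 - ‖w‖) / ‖a‖ : ℝ) : ℂ) • a) ∈ ball (0 : EuclideanSpace ℂ (Fin n)) 1 := by
          intro l hl
          rw [mem_ball_zero_iff]
          have hn1 : ‖((((1 - ‖w‖) / ‖a‖ : ℝ) : ℂ) • a)‖ = 1 - ‖w‖ := by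
            rw [norm_smul, Complex.norm_real, Real.norm_eq_abs, abs_of_pos hcpos]
            field_simp
          calc ‖w + l • ((((1 - ‖w‖) / ‖a‖ : ℝ) : ℂ) • a)‖
              ≤ ‖w‖ + ‖l‖ * ‖((((1 - ‖w‖) / ‖a‖ : ℝ) : ℂ) • a)‖ := by
                rw [← norm_smul]; exact norm_add_le _ _
            _ < 1 := by rw [hn1]; nlinarith
        have hsl := slice_scaled hf hB hcpos hdisk
        rw [show 2 * B / ((1 - ‖w‖) / ‖a‖) = 2 * B * ‖a‖ / (1 - ‖w‖) by
          rw [div_div_eq_mul_div]] at hsl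
        exact hsl
    -- bound on ‖F b‖
    have hFb : ‖fderiv ℂ f w b‖ ≤ 2 * B * ‖b‖ / Real.sqrt (1 - s) := by
      by_cases hb0 : b = 0
      · rw [hb0]
        simp
      · have hbnz : 0 < ‖b‖ := norm_pos_iff.2 hb0
        have hsq : 0 < Real.sqrt (1 - s) := Real.sqrt_pos.2 h1s
        have hcpos : 0 < Real.sqrt (1 - s) / ‖b‖ := div_pos hsq hbnz
        have hdisk : ∀ l : ℂ, ‖l‖ < 1 →
            w + l • (((Real.sqrt (1 - s) / ‖b‖ : ℝ) : ℂ) • b)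
              ∈ ball (0 : EuclideanSpace ℂ (Fin n)) 1 := by
          intro l hl
          rw [mem_ball_zero_iff]
          set y : EuclideanSpace ℂ (Fin n) := l • (((Real.sqrt (1 - s) / ‖b‖ : ℝ) : ℂ) • b)
            with hy_def
          have horth : (inner ℂ w y : ℂ) = 0 := by
            rw [hy_def, inner_smul_right, inner_smul_right, hwb, mul_zero, mul_zero]
          have hny : ‖y‖ = ‖l‖ * Real.sqrt (1 - s) := by
            rw [hy_def, norm_smul, norm_smul, Complex.norm_real, Real.norm_eq_abs,
              abs_of_pos hcpos]
            field_simp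
          have hsq2 : ‖w + y‖ ^ 2 = s + ‖l‖ ^ 2 * (1 - s) := by
            have h := norm_add_sq_eq_norm_sq_add_norm_sq_of_inner_eq_zero w y horth
            have h6 : Real.sqrt (1 - s) * Real.sqrt (1 - s) = 1 - s :=
              Real.mul_self_sqrt h1s.le
            rw [pow_two, h, hny]
            linear_combination (-1 : ℝ) * hs_def + ‖l‖ ^ 2 * h6
          have hl2 : ‖l‖ ^ 2 < 1 := pow_lt_one₀ (norm_nonneg l) hl (by norm_num)
          have h5 : ‖w + y‖ ^ 2 < 1 := by
            rw [hsq2]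
            nlinarith [mul_pos h1s (show (0:ℝ) < 1 - ‖l‖ ^ 2 by linarith)]
          exact lt_of_pow_lt_pow_left₀ 2 zero_le_one (by simpa using h5)
        have hsl := slice_scaled hf hB hcpos hdisk
        rw [show 2 * B / (Real.sqrt (1 - s) / ‖b‖) = 2 * B * ‖b‖ / Real.sqrt (1 - s) by
          rw [div_div_eq_mul_div]] at hsl
        exact hsl
    -- combine
    have hsplit : ‖fderiv ℂ f w v‖ ≤ ‖fderiv ℂ f w a‖ + ‖fderiv ℂ f w b‖ := by
      conv_lhs => rw [hv_ab]
      rw [(fderiv ℂ f w).map_add]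
      exact norm_add_le _ _
    have hFa2 : ‖fderiv ℂ f w a‖ ≤ 8 * Real.sqrt 2 * B * Real.sqrt bg := by
      have h1 : ‖a‖ ≤ 2 * ‖t‖ := by
        rw [hna, div_le_iff₀ hwpos]
        nlinarith [norm_nonneg t]
      have h3 : 2 * B * ‖a‖ / (1 - ‖w‖) ≤ 8 * B * ‖t‖ / (1 - s) := by
        rw [div_le_div_iff₀ (by linarith) h1s]
        have h2 : (1:ℝ) - s ≤ 2 * (1 - ‖w‖) := by
          have : (1:ℝ) - s = (1 - ‖w‖) * (1 + ‖w‖) := by rw [hs_def]; ring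
          nlinarith [this]
        have p1 : ‖a‖ * (1 - s) ≤ (2 * ‖t‖) * (2 * (1 - ‖w‖)) :=
          mul_le_mul h1 h2 (by linarith) (by positivity)
        have p2 : (2 * B) * (‖a‖ * (1 - s)) ≤ (2 * B) * ((2 * ‖t‖) * (2 * (1 - ‖w‖))) :=
          mul_le_mul_of_nonneg_left p1 (by positivity)
        calc 2 * B * ‖a‖ * (1 - s) = (2 * B) * (‖a‖ * (1 - s)) := by ring
          _ ≤ (2 * B) * ((2 * ‖t‖) * (2 * (1 - ‖w‖))) := p2
          _ = 8 * B * ‖t‖ * (1 - ‖w‖) := by ring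
      have h4 : 8 * B * ‖t‖ / (1 - s) ≤ 8 * Real.sqrt 2 * B * Real.sqrt bg := by
        rw [div_le_iff₀ h1s]
        calc 8 * B * ‖t‖ ≤ 8 * B * (Real.sqrt 2 * Real.sqrt bg * (1 - s)) :=
              mul_le_mul_of_nonneg_left ht_le (by positivity)
          _ = 8 * Real.sqrt 2 * B * Real.sqrt bg * (1 - s) := by ring
      exact le_trans hFa (le_trans h3 h4)
    have hFb2 : ‖fderiv ℂ f w b‖ ≤ 2 * Real.sqrt 2 * B * Real.sqrt bg := by
      have hsq : 0 < Real.sqrt (1 - s) := Real.sqrt_pos.2 h1s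
      have hb_le : ‖b‖ ≤ Real.sqrt 2 * Real.sqrt bg * Real.sqrt (1 - s) :=
        le_trans hnb_le hv_le
      have h4 : 2 * B * ‖b‖ / Real.sqrt (1 - s) ≤ 2 * Real.sqrt 2 * B * Real.sqrt bg := by
        rw [div_le_iff₀ hsq]
        calc 2 * B * ‖b‖ ≤ 2 * B * (Real.sqrt 2 * Real.sqrt bg * Real.sqrt (1 - s)) :=
              mul_le_mul_of_nonneg_left hb_le (by positivity)
          _ = 2 * Real.sqrt 2 * B * Real.sqrt bg * Real.sqrt (1 - s) := by ring
      exact le_trans hFb h4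
    have h20 : 10 * Real.sqrt 2 ≤ 32 :=
      le_trans (mul_le_mul_of_nonneg_left sqrt2 (by norm_num)) (by norm_num)
    calc ‖fderiv ℂ f w v‖ ≤ ‖fderiv ℂ f w a‖ + ‖fderiv ℂ f w b‖ := hsplit
      _ ≤ 8 * Real.sqrt 2 * B * Real.sqrt bg + 2 * Real.sqrt 2 * B * Real.sqrt bg :=
          add_le_add hFa2 hFb2
      _ = 10 * Real.sqrt 2 * (B * Real.sqrt bg) := by ring
      _ ≤ 32 * (B * Real.sqrt bg) :=
          mul_le_mul_of_nonneg_right h20 (mul_nonneg hBnn hsqrt_nn)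
      _ = 32 * B * Real.sqrt bg := by ring


/-- If `u ∈ B` (with Bloch norm bound `Nu`) and
`M₂ = sup_z (1-|z|²)|u(z)| √(H_{φ(z)}(φ'(z)z, φ'(z)z)) < ∞`, then `uC_φ : H^∞ → B`
is bounded, with `‖uC_φ f‖_B ≲ (Nu + M₂)‖f‖_∞` (constant depending only on `n`). -/
theorem stmt16 (n : ℕ) :
    ∃ C : ℝ, 0 < C ∧
      ∀ (u : EuclideanSpace ℂ (Fin n) → ℂ)
        (φ : EuclideanSpace ℂ (Fin n) → EuclideanSpace ℂ (Fin n)),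
        DifferentiableOn ℂ u (Metric.ball (0 : EuclideanSpace ℂ (Fin n)) 1) →
        DifferentiableOn ℂ φ (Metric.ball (0 : EuclideanSpace ℂ (Fin n)) 1) →
        (∀ z ∈ Metric.ball (0 : EuclideanSpace ℂ (Fin n)) 1,
          φ z ∈ Metric.ball (0 : EuclideanSpace ℂ (Fin n)) 1) →
        ∀ Nu : ℝ, (∀ z ∈ Metric.ball (0 : EuclideanSpace ℂ (Fin n)) 1,
          ‖u 0‖ + (1 - ‖z‖ ^ 2) * ‖fderiv ℂ u z z‖ ≤ Nu) →
        ∀ M₂ : ℝ, (∀ z ∈ Metric.ball (0 : EuclideanSpace ℂ (Fin n)) 1,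
          (1 - ‖z‖ ^ 2) * ‖u z‖ * Real.sqrt (bergman (φ z) (fderiv ℂ φ z z)) ≤ M₂) →
        ∀ (f : EuclideanSpace ℂ (Fin n) → ℂ) (B : ℝ),
          DifferentiableOn ℂ f (Metric.ball (0 : EuclideanSpace ℂ (Fin n)) 1) →
          (∀ z ∈ Metric.ball (0 : EuclideanSpace ℂ (Fin n)) 1, ‖f z‖ ≤ B) →
          ∀ z ∈ Metric.ball (0 : EuclideanSpace ℂ (Fin n)) 1,
            ‖u 0 * f (φ 0)‖ + (1 - ‖z‖ ^ 2) * ‖fderiv ℂ (fun w => u w * f (φ w)) z z‖ ≤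
              C * ((Nu + M₂) * B) := by
  refine ⟨32, by norm_num, ?_⟩
  intro u φ hu hφ hφmem Nu hNu M₂ hM₂ f B hf hB z hz
  have h0mem : (0 : EuclideanSpace ℂ (Fin n)) ∈ Metric.ball (0 : EuclideanSpace ℂ (Fin n)) 1 := by
    simp
  have hz1 : ‖z‖ < 1 := by simpa using mem_ball_zero_iff.1 hz
  have h1z : 0 ≤ 1 - ‖z‖ ^ 2 := by nlinarith [norm_nonneg z]
  have hBnn : 0 ≤ B := le_trans (norm_nonneg _) (hB _ (hφmem 0 h0mem))
  have hNu0 : ‖u 0‖ ≤ Nu := by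
    have h := hNu 0 h0mem
    simpa using h
  have hNunn : 0 ≤ Nu := le_trans (norm_nonneg _) hNu0
  have hM0 : 0 ≤ M₂ := by
    have h := hM₂ 0 h0mem
    simpa [bergman] using h
  -- derivative computation
  have hu' : DifferentiableAt ℂ u z := hu.differentiableAt (Metric.isOpen_ball.mem_nhds hz)
  have hφ' : DifferentiableAt ℂ φ z := hφ.differentiableAt (Metric.isOpen_ball.mem_nhds hz)
  have hf' : DifferentiableAt ℂ f (φ z) :=
    hf.differentiableAt (Metric.isOpen_ball.mem_nhds (hφmem z hz))
  have hcomp : HasFDerivAt (fun w => f (φ w)) ((fderiv ℂ f (φ z)).comp (fderiv ℂ φ z)) z :=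
    hf'.hasFDerivAt.comp z hφ'.hasFDerivAt
  have hmul : HasFDerivAt (fun w => u w * f (φ w))
      (u z • ((fderiv ℂ f (φ z)).comp (fderiv ℂ φ z)) + f (φ z) • fderiv ℂ u z) z :=
    hu'.hasFDerivAt.mul hcomp
  have hfd := hmul.fderiv
  have hnorm : ‖fderiv ℂ (fun w => u w * f (φ w)) z z‖ ≤
      ‖u z‖ * ‖fderiv ℂ f (φ z) (fderiv ℂ φ z z)‖ + ‖f (φ z)‖ * ‖fderiv ℂ u z z‖ := by
    rw [hfd]
    rw [ContinuousLinearMap.add_apply, ContinuousLinearMap.smul_apply,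
      ContinuousLinearMap.smul_apply, ContinuousLinearMap.comp_apply]
    refine (norm_add_le _ _).trans ?_
    rw [norm_smul, norm_smul]
  clear hfd hmul hcomp hu' hφ' hf'
  -- key estimates
  have hkey : ‖fderiv ℂ f (φ z) (fderiv ℂ φ z z)‖ ≤
      32 * B * Real.sqrt (bergman (φ z) (fderiv ℂ φ z z)) :=
    bergman_bound hf hB (hφmem z hz) (fderiv ℂ φ z z)
  have hNz := hNu z hz
  have hMz := hM₂ z hz
  have hfφ0 : ‖f (φ 0)‖ ≤ B := hB _ (hφmem 0 h0mem)
  have hfφz : ‖f (φ z)‖ ≤ B := hB _ (hφmem z hz)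
  set S : ℝ := Real.sqrt (bergman (φ z) (fderiv ℂ φ z z)) with hS_def
  have hSnn : 0 ≤ S := Real.sqrt_nonneg _
  set K : ℝ := ‖fderiv ℂ f (φ z) (fderiv ℂ φ z z)‖ with hK_def
  set D : ℝ := ‖fderiv ℂ u z z‖ with hD_def
  set U : ℝ := ‖u z‖ with hU_def
  have hKnn : 0 ≤ K := norm_nonneg _
  have hDnn : 0 ≤ D := norm_nonneg _
  have hUnn : 0 ≤ U := norm_nonneg _
  have e1 : ‖u 0 * f (φ 0)‖ ≤ ‖u 0‖ * B := by
    rw [norm_mul]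
    exact mul_le_mul_of_nonneg_left hfφ0 (norm_nonneg _)
  have e3 : U * K ≤ U * (32 * B * S) := mul_le_mul_of_nonneg_left hkey hUnn
  have e4 : ‖f (φ z)‖ * D ≤ B * D := mul_le_mul_of_nonneg_right hfφz hDnn
  have e5 : (1 - ‖z‖ ^ 2) * ‖fderiv ℂ (fun w => u w * f (φ w)) z z‖ ≤
      (1 - ‖z‖ ^ 2) * (U * (32 * B * S) + B * D) := by
    refine le_trans (mul_le_mul_of_nonneg_left hnorm h1z) ?_
    exact mul_le_mul_of_nonneg_left (add_le_add e3 e4) h1z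
  have e6 : (1 - ‖z‖ ^ 2) * (U * (32 * B * S) + B * D) =
      32 * B * ((1 - ‖z‖ ^ 2) * U * S) + ((1 - ‖z‖ ^ 2) * D) * B := by ring
  have e7 : 32 * B * ((1 - ‖z‖ ^ 2) * U * S) ≤ 32 * B * M₂ :=
    mul_le_mul_of_nonneg_left hMz (by positivity)
  have e9 : (‖u 0‖ + (1 - ‖z‖ ^ 2) * D) * B ≤ Nu * B := mul_le_mul_of_nonneg_right hNz hBnn
  have e10 : 0 ≤ Nu * B := mul_nonneg hNunn hBnn
  nlinarith [e1, e5, e6, e7, e9, e10]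
end
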